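/- Define {x} : [0,1) → [0,1/2) by {x} = x if x ∈ [0,1/2) and {x} = x - 1/2 otherwise. If x, y, z ∈ [0,1] satisfy 2y = x + z and (1-{x})² + (1-{z})² - 2(1-{y})² < 2((z-x)/2)², then min(x,z) < 1/2 ≤ y. -/

import Mathlib

/-- The nonstandard fractional map `{·} : [0,1) → [0,1/2)`. -/
noncomputable def br (t : ℝ) : ℝ := if t < 1/2 then t else t - 1/2

theorem bracket_law (x y z : ℝ)
    (hx : x ∈ Set.Ico (0:ℝ) 1) (hy : y ∈ Set.Ico (0:ℝ) 1) (hz : z ∈ Set.Ico (0:ℝ) 1)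
    (hap : 2 * y = x + z)
    (h : (1 - br x)^2 + (1 - br z)^2 - 2 * (1 - br y)^2 < 2 * ((z - x)/2)^2) :
    min x z < 1/2 ∧ 1/2 ≤ y := by
  obtain ⟨hx0, hx1⟩ := hx
  obtain ⟨hy0, hy1⟩ := hy
  obtain ⟨hz0, hz1⟩ := hz
  unfold br at h
  have key : 1/2 ≤ y := by
    by_contra hyc
    push_neg at hyc
    split_ifs at h <;> nlinarith
  refine ⟨?_, key⟩
  by_contra hm
  push_neg at hm
  rw [le_min_iff] at hm
  obtain ⟨hmx, hmz⟩ := hm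
  split_ifs at h <;> nlinarith
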